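/- Let s₁, d₁, s₂, d₂ be nonnegative integers with s₁ + d₁ = s₂ + d₂ ≥ 2 and {s₁, d₁} ≠ {s₂, d₂}. Then there exists a finite nonempty set A of nonnegative integers such that |s₁A - d₁A| > |s₂A - d₂A|. -/

import Mathlib

open Finset Pointwise

/-- `itSum k A` is the k-fold sumset A + A + ⋯ + A (with `itSum 0 A = {0}`). -/
def itSum : ℕ → Finset ℤ → Finset ℤ
  | 0, _ => {0}
  | n+1, A => A + itSum n A

/-- `gDiff s d A = sA - dA`. -/
def gDiff (s d : ℕ) (A : Finset ℤ) : Finset ℤ := itSum s A - itSum d A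
lemma itSum_zero (A : Finset ℤ) : itSum 0 A = {0} := rfl
lemma itSum_succ (k : ℕ) (A : Finset ℤ) : itSum (k+1) A = A + itSum k A := rfl

lemma itSum_add (p q : ℕ) (A : Finset ℤ) : itSum (p+q) A = itSum p A + itSum q A := by
  induction p with
  | zero => simp [itSum_zero, Finset.singleton_add]
  | succ n ih =>
      have : n + 1 + q = (n + q) + 1 := by omega
      rw [this, itSum_succ, ih, itSum_succ, add_assoc]

lemma mem_itSum_add {p q : ℕ} {A : Finset ℤ} {x y : ℤ}
    (hx : x ∈ itSum p A) (hy : y ∈ itSum q A) : x + y ∈ itSum (p+q) A := by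
  rw [itSum_add]; exact Finset.add_mem_add hx hy

lemma zero_mem_itSum {A : Finset ℤ} (h : (0:ℤ) ∈ A) (k : ℕ) : (0:ℤ) ∈ itSum k A := by
  induction k with
  | zero => simp [itSum_zero]
  | succ n ih => rw [itSum_succ]; exact Finset.mem_add.2 ⟨0, h, 0, ih, by ring⟩

lemma itSum_mono {A B : Finset ℤ} (h : A ⊆ B) (k : ℕ) : itSum k A ⊆ itSum k B := by
  induction k with
  | zero => simp [itSum_zero]
  | succ n ih => rw [itSum_succ, itSum_succ]; exact Finset.add_subset_add h ih

lemma itSum_le {A : Finset ℤ} {hi : ℤ} (h : ∀ a ∈ A, a ≤ hi) {k : ℕ} {x : ℤ}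
    (hx : x ∈ itSum k A) : x ≤ k * hi := by
  induction k generalizing x with
  | zero => simp [itSum_zero] at hx; simp [hx]
  | succ n ih =>
      rw [itSum_succ] at hx
      obtain ⟨a, ha, y, hy, rfl⟩ := Finset.mem_add.1 hx
      have := h a ha; have := ih hy; push_cast; nlinarith [ih hy]

lemma itSum_nonneg {A : Finset ℤ} (h : ∀ a ∈ A, 0 ≤ a) {k : ℕ} {x : ℤ}
    (hx : x ∈ itSum k A) : 0 ≤ x := by
  induction k generalizing x with
  | zero => simp [itSum_zero] at hx; simp [hx]
  | succ n ih =>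
      rw [itSum_succ] at hx
      obtain ⟨a, ha, y, hy, rfl⟩ := Finset.mem_add.1 hx
      have := h a ha; have := ih hy; omega

lemma itSum_reflect {X Y : Finset ℤ} {N : ℤ} (h : ∀ c ∈ X, N - c ∈ Y) {k : ℕ} {x : ℤ}
    (hx : x ∈ itSum k X) : k * N - x ∈ itSum k Y := by
  induction k generalizing x with
  | zero => simp [itSum_zero] at hx ⊢; omega
  | succ n ih =>
      rw [itSum_succ] at hx
      obtain ⟨a, ha, y, hy, rfl⟩ := Finset.mem_add.1 hx
      rw [itSum_succ]
      refine Finset.mem_add.2 ⟨N - a, h a ha, n * N - y, ih hy, by push_cast; ring⟩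

/-- the construction: `{0} ∪ [K, 2K] ∪ (3K - G)` -/
noncomputable def mset (K : ℤ) (G : Finset ℤ) : Finset ℤ :=
  insert 0 (Finset.Icc K (2*K) ∪ G.image (fun g => 3*K - g))

section msetLemmas
variable {K : ℤ} {G : Finset ℤ}

lemma mset_nonneg (hK : 1 ≤ K) (hG : ∀ g ∈ G, 0 ≤ g ∧ g ≤ K - 1) :
    ∀ a ∈ mset K G, 0 ≤ a := by
  intro a ha
  simp only [mset, Finset.mem_insert, Finset.mem_union, Finset.mem_Icc,
    Finset.mem_image] at ha
  rcases ha with rfl | h | ⟨g, hg, rfl⟩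
  · rfl
  · omega
  · have := hG g hg; omega

lemma mset_le (hK : 1 ≤ K) (hG : ∀ g ∈ G, 0 ≤ g ∧ g ≤ K - 1) :
    ∀ a ∈ mset K G, a ≤ 3*K := by
  intro a ha
  simp only [mset, Finset.mem_insert, Finset.mem_union, Finset.mem_Icc,
    Finset.mem_image] at ha
  rcases ha with rfl | h | ⟨g, hg, rfl⟩
  · omega
  · omega
  · have := hG g hg; omega

lemma mset_small (hK : 1 ≤ K) (hG : ∀ g ∈ G, 0 ≤ g ∧ g ≤ K - 1) :
    ∀ a ∈ mset K G, a < K → a = 0 := by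
  intro a ha hlt
  simp only [mset, Finset.mem_insert, Finset.mem_union, Finset.mem_Icc,
    Finset.mem_image] at ha
  rcases ha with rfl | h | ⟨g, hg, rfl⟩
  · rfl
  · omega
  · have := hG g hg; omega

lemma mset_big (hK : 1 ≤ K) (hG : ∀ g ∈ G, 0 ≤ g ∧ g ≤ K - 1) :
    ∀ a ∈ mset K G, 2*K < a → 3*K - a ∈ G := by
  intro a ha hlt
  simp only [mset, Finset.mem_insert, Finset.mem_union, Finset.mem_Icc,
    Finset.mem_image] at ha
  rcases ha with rfl | h | ⟨g, hg, rfl⟩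
  · omega
  · omega
  · simpa using hg

lemma zero_mem_mset : (0:ℤ) ∈ mset K G := Finset.mem_insert_self _ _

lemma top_mem_mset {g : ℤ} (hg : g ∈ G) : 3*K - g ∈ mset K G := by
  exact Finset.mem_insert_of_mem (Finset.mem_union_right _
    (Finset.mem_image.2 ⟨g, hg, rfl⟩))

lemma mid_mem_mset {a : ℤ} (h1 : K ≤ a) (h2 : a ≤ 2*K) : a ∈ mset K G :=
  Finset.mem_insert_of_mem (Finset.mem_union_left _ (Finset.mem_Icc.2 ⟨h1, h2⟩))

lemma n_mem_mset (h0 : (0:ℤ) ∈ G) : 3*K ∈ mset K G := by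
  simpa using top_mem_mset (K := K) h0



/-- core set used for covering the middle -/
noncomputable def cset (K : ℤ) : Finset ℤ := insert 0 (insert (3*K) (Finset.Icc K (2*K)))

lemma cset_subset_mset (h0 : (0:ℤ) ∈ G) : cset K ⊆ mset K G := by
  intro a ha
  simp only [cset, Finset.mem_insert, Finset.mem_Icc] at ha
  rcases ha with rfl | rfl | h
  · exact zero_mem_mset
  · exact n_mem_mset h0
  · exact mid_mem_mset h.1 h.2

lemma cset_reflect (h0 : (0:ℤ) ∈ G) : ∀ c ∈ cset K, 3*K - c ∈ mset K G := by
  intro c hc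
  simp only [cset, Finset.mem_insert, Finset.mem_Icc] at hc
  rcases hc with rfl | rfl | h
  · simpa using n_mem_mset h0
  · simpa using (zero_mem_mset : (0:ℤ) ∈ mset K G)
  · exact mid_mem_mset (by omega) (by omega)

end msetLemmas

lemma mem_cset_mid {K a : ℤ} (h1 : K ≤ a) (h2 : a ≤ 2*K) : a ∈ cset K := by
  simp only [cset, Finset.mem_insert, Finset.mem_Icc]; tauto

lemma mem_cset_zero {K : ℤ} : (0:ℤ) ∈ cset K := by simp [cset]
lemma mem_cset_top {K : ℤ} : 3*K ∈ cset K := by simp [cset]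


lemma cover {K : ℤ} (hK : 1 ≤ K) :
    ∀ h : ℕ, 1 ≤ h → ∀ z : ℤ, K ≤ z → z ≤ h * (3*K) - K → z ∈ itSum h (cset K) := by
  intro h
  induction h with
  | zero => omega
  | succ n ih =>
      intro _ z hz1 hz2
      have hz2' : z ≤ ((n:ℤ)+1) * (3*K) - K := by push_cast at hz2; linarith
      rcases Nat.eq_zero_or_pos n with rfl | hn
      · rw [itSum_succ, itSum_zero]
        refine Finset.mem_add.2 ⟨z, mem_cset_mid hz1 (by push_cast at hz2'; omega), 0, by simp, by ring⟩
      rcases le_or_gt z ((n : ℤ) * (3*K) - K) with hle | hgt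
      · rw [itSum_succ]
        exact Finset.mem_add.2 ⟨0, mem_cset_zero, z, ih hn z hz1 hle, by ring⟩
      rcases Nat.eq_or_lt_of_le hn with h1 | h2
      · -- n = 1, z ∈ (2K, 5K]
        have hn1 : (n : ℤ) = 1 := by exact_mod_cast h1.symm
        rw [hn1] at hz2' hgt
        rcases le_or_gt (4*K) z with h4 | h4
        · rw [itSum_succ]
          refine Finset.mem_add.2 ⟨3*K, mem_cset_top, z - 3*K, ?_, by ring⟩
          exact ih hn _ (by omega) (by rw [hn1]; omega)
        · rcases le_or_gt z (3*K) with h3 | h3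
          · rw [itSum_succ]
            refine Finset.mem_add.2 ⟨K, mem_cset_mid le_rfl (by omega), z - K, ?_, by ring⟩
            exact ih hn _ (by omega) (by rw [hn1]; omega)
          · rw [itSum_succ]
            refine Finset.mem_add.2 ⟨z - 2*K, mem_cset_mid (by omega) (by omega), 2*K, ?_, by ring⟩
            exact ih hn _ (by omega) (by rw [hn1]; omega)
      · -- n ≥ 2
        rw [itSum_succ]
        refine Finset.mem_add.2 ⟨3*K, mem_cset_top, z - 3*K, ?_, by ring⟩
        have hn2 : (2:ℤ) ≤ (n:ℤ) := by exact_mod_cast h2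
        exact ih hn _ (by nlinarith) (by nlinarith)

section Main
variable {K : ℤ} {G : Finset ℤ}

lemma itSum_small (hK : 1 ≤ K) (hG : ∀ g ∈ G, 0 ≤ g ∧ g ≤ K - 1)
    {k : ℕ} {x : ℤ} (hx : x ∈ itSum k (mset K G)) (hlt : x < K) : x = 0 := by
  induction k generalizing x with
  | zero => simpa [itSum_zero] using hx
  | succ n ih =>
      rw [itSum_succ] at hx
      obtain ⟨a, ha, y, hy, rfl⟩ := Finset.mem_add.1 hx
      have ha0 : 0 ≤ a := mset_nonneg hK hG a ha
      have hy0 : 0 ≤ y := itSum_nonneg (mset_nonneg hK hG) hy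
      have : a = 0 := mset_small hK hG a ha (by omega)
      have : y = 0 := ih hy (by omega)
      omega

lemma itSum_top (hK : 1 ≤ K) (hG : ∀ g ∈ G, 0 ≤ g ∧ g ≤ K - 1)
    {k : ℕ} {q : ℤ} (hq : q ∈ itSum k (mset K G)) (hlt : k * (3*K) - q < K) :
    k * (3*K) - q ∈ itSum k G := by
  induction k generalizing q with
  | zero => simp [itSum_zero] at hq ⊢; omega
  | succ n ih =>
      rw [itSum_succ] at hq
      obtain ⟨b, hb, y, hy, rfl⟩ := Finset.mem_add.1 hq
      have hb3 : b ≤ 3*K := mset_le hK hG b hb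
      have hy3 : y ≤ n * (3*K) := itSum_le (mset_le hK hG) hy
      have h1 : 0 ≤ 3*K - b := by omega
      have h2 : 0 ≤ (n:ℤ) * (3*K) - y := by omega
      have hcast : ((n:ℕ)+1 : ℕ) * (3*K) - (b + y) = (3*K - b) + ((n:ℤ) * (3*K) - y) := by
        push_cast; ring
      rw [hcast] at hlt ⊢
      have hbG : 3*K - b ∈ G := mset_big hK hG b hb (by omega)
      rw [itSum_succ]
      exact Finset.mem_add.2 ⟨3*K - b, hbG, (n:ℤ) * (3*K) - y, ih hy (by omega), rfl⟩

lemma main_eq (hK : 1 ≤ K) (hG : ∀ g ∈ G, 0 ≤ g ∧ g ≤ K - 1) (h0 : (0:ℤ) ∈ G)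
    (s d : ℕ) (hsd : 1 ≤ s + d) :
    gDiff s d (mset K G) =
      ((itSum d G ∩ Finset.Icc 0 (K-1)).image (fun c => c - d*(3*K))) ∪
      Finset.Icc (K - d*(3*K)) (s*(3*K) - K) ∪
      ((itSum s G ∩ Finset.Icc 0 (K-1)).image (fun c => s*(3*K) - c)) := by
  ext x
  simp only [gDiff, Finset.mem_union, Finset.mem_image, Finset.mem_inter,
    Finset.mem_Icc, Finset.mem_sub]
  constructor
  · rintro ⟨p, hp, q, hq, rfl⟩
    have hp0 : 0 ≤ p := itSum_nonneg (mset_nonneg hK hG) hp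
    have hq0 : 0 ≤ q := itSum_nonneg (mset_nonneg hK hG) hq
    have hpN : p ≤ s * (3*K) := itSum_le (mset_le hK hG) hp
    have hqN : q ≤ d * (3*K) := itSum_le (mset_le hK hG) hq
    rcases lt_or_ge (p - q) (K - d*(3*K)) with hlo | hlo
    · -- bottom piece
      left; left
      have hpK : p = 0 := itSum_small hK hG hp (by omega)
      have : (d:ℤ) * (3*K) - q ∈ itSum d G := itSum_top hK hG hq (by omega)
      exact ⟨d*(3*K) - q, ⟨this, by omega, by omega⟩, by omega⟩
    rcases le_or_gt (p - q) (s*(3*K) - K) with hhi | hhi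
    · left; right; exact ⟨hlo, hhi⟩
    · right
      have hqK : q = 0 := itSum_small hK hG hq (by omega)
      have : (s:ℤ) * (3*K) - p ∈ itSum s G := itSum_top hK hG hp (by omega)
      exact ⟨s*(3*K) - p, ⟨this, by omega, by omega⟩, by omega⟩
  · rintro ((⟨c, ⟨hc, hc0, hcK⟩, rfl⟩ | ⟨hlo, hhi⟩) | ⟨c, ⟨hc, hc0, hcK⟩, rfl⟩)
    · -- bottom piece: 0 - (d*3K - c)
      refine ⟨0, zero_mem_itSum zero_mem_mset s, d*(3*K) - c, ?_, by ring⟩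
      exact itSum_reflect (fun g hg => top_mem_mset hg) hc
    · -- middle: via cover
      have hz : x + d*(3*K) ∈ itSum (s+d) (cset K) := by
        apply cover hK (s+d) hsd
        · omega
        · push_cast; linarith
      rw [itSum_add] at hz
      obtain ⟨z1, hz1, z2, hz2, hzz⟩ := Finset.mem_add.1 hz
      refine ⟨z1, itSum_mono (cset_subset_mset h0) s hz1,
        d*(3*K) - z2, itSum_reflect (cset_reflect h0) hz2, by omega⟩
    · -- top piece: (s*3K - c) - 0
      refine ⟨s*(3*K) - c, ?_, 0, zero_mem_itSum zero_mem_mset d, by ring⟩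
      exact itSum_reflect (fun g hg => top_mem_mset hg) hc

end Main

section Card
variable {K : ℤ} {G : Finset ℤ}

lemma main_card (hK : 1 ≤ K) (hG : ∀ g ∈ G, 0 ≤ g ∧ g ≤ K - 1) (h0 : (0:ℤ) ∈ G)
    (s d : ℕ) (hsd : 1 ≤ s + d) :
    (gDiff s d (mset K G)).card =
      (itSum d G ∩ Finset.Icc 0 (K-1)).card
      + ((s+d) * (3*K) - 2*K + 1).toNat
      + (itSum s G ∩ Finset.Icc 0 (K-1)).card := by
  rw [main_eq hK hG h0 s d hsd]
  have hinj1 : Function.Injective (fun c : ℤ => c - d*(3*K)) := fun a b h => by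
    simpa using h
  have hinj3 : Function.Injective (fun c : ℤ => s*(3*K) - c) := fun a b h => by
    simp only at h; omega
  have hd1 : Disjoint
      ((itSum d G ∩ Finset.Icc 0 (K-1)).image (fun c => c - d*(3*K)))
      (Finset.Icc (K - d*(3*K)) (s*(3*K) - K)) := by
    rw [Finset.disjoint_left]
    rintro a ha hb
    obtain ⟨c, hc, rfl⟩ := Finset.mem_image.1 ha
    have := (Finset.mem_inter.1 hc).2
    rw [Finset.mem_Icc] at this hb
    omega
  have hd2 : Disjoint
      (((itSum d G ∩ Finset.Icc 0 (K-1)).image (fun c => c - d*(3*K))) ∪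
        Finset.Icc (K - d*(3*K)) (s*(3*K) - K))
      ((itSum s G ∩ Finset.Icc 0 (K-1)).image (fun c => s*(3*K) - c)) := by
    rw [Finset.disjoint_left]
    rintro a ha hb
    obtain ⟨c, hc, rfl⟩ := Finset.mem_image.1 hb
    have hc2 := (Finset.mem_inter.1 hc).2
    rw [Finset.mem_Icc] at hc2
    rcases Finset.mem_union.1 ha with h1 | h1
    · obtain ⟨c', hc', he⟩ := Finset.mem_image.1 h1
      have hc'2 := (Finset.mem_inter.1 hc').2
      rw [Finset.mem_Icc] at hc'2
      have hsd' : (1:ℤ) ≤ (s:ℤ) + (d:ℤ) := by exact_mod_cast hsd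
      have h3 : ((s:ℤ) + d) * (3*K) ≥ 3*K := by nlinarith
      push_cast at he ⊢
      nlinarith
    · rw [Finset.mem_Icc] at h1
      omega
  rw [Finset.card_union_of_disjoint hd2, Finset.card_union_of_disjoint hd1,
    Finset.card_image_of_injective _ hinj1, Finset.card_image_of_injective _ hinj3,
    Int.card_Icc]
  congr 2
  push_cast
  ring

end Card

lemma itSum_pair (k : ℕ) : itSum k ({0,1} : Finset ℤ) = Finset.Icc 0 (k:ℤ) := by
  induction k with
  | zero => simp [itSum_zero]
  | succ n ih =>
      rw [itSum_succ, ih]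
      ext x
      simp only [Finset.mem_add, Finset.mem_insert, Finset.mem_singleton, Finset.mem_Icc]
      constructor
      · rintro ⟨a, (rfl | rfl), y, hy, rfl⟩ <;> push_cast <;> omega
      · intro hx
        push_cast at hx
        rcases le_or_gt x n with h | h
        · exact ⟨0, Or.inl rfl, x, by omega, by ring⟩
        · exact ⟨1, Or.inr rfl, x - 1, by omega, by ring⟩

lemma keyB (s₁ d₁ s₂ d₂ : ℕ) (hsum : s₁ + d₁ = s₂ + d₂) (h2 : 2 ≤ s₁ + d₁)
    (hd₁ : d₁ ≤ s₁) (hs : s₁ < s₂) :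
    ∃ A : Finset ℤ, A.Nonempty ∧ (∀ a ∈ A, 0 ≤ a) ∧
      (gDiff s₁ d₁ A).card > (gDiff s₂ d₂ A).card := by
  have hs₁1 : 1 ≤ s₁ := by omega
  have hd₂ : d₂ < d₁ := by omega
  set K : ℤ := (s₁:ℤ) + 1 with hKdef
  have hK : 1 ≤ K := by omega
  set G : Finset ℤ := {0, 1} with hGdef
  have hG : ∀ g ∈ G, 0 ≤ g ∧ g ≤ K - 1 := by
    intro g hg
    rw [hGdef] at hg
    simp only [Finset.mem_insert, Finset.mem_singleton] at hg
    rcases hg with rfl | rfl <;> constructor <;> push_cast <;> omega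
  have h0 : (0:ℤ) ∈ G := by simp [hGdef]
  refine ⟨mset K G, ⟨0, zero_mem_mset⟩, mset_nonneg hK hG, ?_⟩
  rw [main_card hK hG h0 s₁ d₁ (by omega), main_card hK hG h0 s₂ d₂ (by omega)]
  have hT : ∀ k : ℕ, (itSum k G ∩ Finset.Icc 0 (K-1)).card = (min (k:ℤ) (K-1) + 1).toNat := by
    intro k
    have hINT : Finset.Icc (0:ℤ) (k:ℤ) ∩ Finset.Icc 0 (K-1) = Finset.Icc 0 (min (k:ℤ) (K-1)) := by
      ext x
      simp only [Finset.mem_inter, Finset.mem_Icc]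
      omega
    rw [hGdef, itSum_pair, hINT, Int.card_Icc]
    congr 1
    omega
  rw [hT, hT, hT, hT]
  have hmid : ((s₁:ℤ) + (d₁:ℤ)) = ((s₂:ℤ) + (d₂:ℤ)) := by exact_mod_cast hsum
  rw [hmid]
  have c1 : (min (s₁:ℤ) (K-1) + 1).toNat = s₁ + 1 := by omega
  have c2 : (min (d₁:ℤ) (K-1) + 1).toNat = d₁ + 1 := by
    have : ((d₁:ℤ)) ≤ (s₁:ℤ) := by exact_mod_cast hd₁
    omega
  have c3 : (min (s₂:ℤ) (K-1) + 1).toNat = s₁ + 1 := by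
    have : ((s₁:ℤ)) < (s₂:ℤ) := by exact_mod_cast hs
    omega
  have c4 : (min (d₂:ℤ) (K-1) + 1).toNat = d₂ + 1 := by
    have : ((d₂:ℤ)) < (d₁:ℤ) := by exact_mod_cast hd₂
    have : ((d₁:ℤ)) ≤ (s₁:ℤ) := by exact_mod_cast hd₁
    omega
  rw [c1, c2, c3, c4]
  omega

noncomputable def blocks (k : ℕ) (m : ℤ) : Finset ℤ :=
  (Finset.range (k+1)).biUnion (fun j => Finset.Icc ((j:ℤ)*m) ((j:ℤ)*m + ((k:ℤ) - (j:ℤ))))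

lemma itSum_triple (k : ℕ) (m : ℤ) : itSum k ({0, 1, m} : Finset ℤ) = blocks k m := by
  induction k with
  | zero => simp [itSum_zero, blocks]
  | succ n ih =>
      rw [itSum_succ, ih]
      ext x
      simp only [blocks, Finset.mem_add, Finset.mem_insert, Finset.mem_singleton,
        Finset.mem_biUnion, Finset.mem_range, Finset.mem_Icc]
      constructor
      · rintro ⟨a, (rfl | rfl | rfl), y, ⟨j, hj, hy1, hy2⟩, rfl⟩
        · exact ⟨j, by omega, by push_cast; omega, by push_cast at hy2 ⊢; omega⟩
        · exact ⟨j, by omega, by push_cast; omega, by push_cast at hy2 ⊢; omega⟩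
        · refine ⟨j+1, by omega, ?_, ?_⟩ <;> push_cast at hy1 hy2 ⊢ <;> nlinarith
      · rintro ⟨j, hj, hx1, hx2⟩
        push_cast at hx1 hx2
        rcases le_or_gt ((j:ℤ)*m + 1) x with hge | hlt
        · -- x - 1 in block j of n ; need j ≤ n
          have hjn : j ≤ n := by
            by_contra hc
            have hje : j = n+1 := by omega
            subst hje
            push_cast at hge hx2
            omega
          exact ⟨1, by tauto, x - 1, ⟨j, by omega, by omega, by push_cast; omega⟩, by ring⟩
        · -- x = j*m
          have hxe : x = (j:ℤ)*m := by omega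
          rcases Nat.eq_zero_or_pos j with rfl | hj0
          · exact ⟨0, by tauto, 0, ⟨0, by omega, by simp, by push_cast; omega⟩, by
              push_cast at hxe; omega⟩
          · refine ⟨m, by tauto, x - m, ⟨j-1, by omega, ?_, ?_⟩, by ring⟩
            · have : ((j-1 : ℕ):ℤ) = (j:ℤ) - 1 := by
                have : (1:ℤ) ≤ (j:ℤ) := by exact_mod_cast hj0
                push_cast [Nat.cast_sub hj0]; ring
              rw [this]; nlinarith
            · have h1 : ((j-1 : ℕ):ℤ) = (j:ℤ) - 1 := by push_cast [Nat.cast_sub hj0]; ring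
              rw [h1]
              have h2 : (1:ℤ) ≤ (j:ℤ) := by exact_mod_cast hj0
              have hjn1 : (j:ℤ) ≤ (n:ℤ) + 1 := by exact_mod_cast Nat.lt_succ_iff.1 hj
              nlinarith

lemma blocks_card (k : ℕ) (m : ℤ) (hm : (k:ℤ) < m) :
    (blocks k m).card = ∑ j ∈ Finset.range (k+1), (k+1-j) := by
  rw [blocks, Finset.card_biUnion]
  · apply Finset.sum_congr rfl
    intro j hj
    rw [Finset.mem_range] at hj
    rw [Int.card_Icc]
    have hjk : (j:ℤ) ≤ (k:ℤ) := by exact_mod_cast Nat.lt_succ_iff.1 hj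
    have : ((j:ℤ)*m + ((k:ℤ) - (j:ℤ)) + 1 - (j:ℤ)*m) = ((k:ℤ) - j + 1) := by ring
    rw [this]
    omega
  · intro i hi j hj hij
    rw [Finset.mem_coe, Finset.mem_range] at hi hj
    rw [Function.onFun, Finset.disjoint_left]
    intro x hx1 hx2
    rw [Finset.mem_Icc] at hx1 hx2
    rcases Nat.lt_or_ge i j with h | h
    · have h1 : (i:ℤ) + 1 ≤ (j:ℤ) := by exact_mod_cast h
      have h2 : (i:ℤ) ≤ (k:ℤ) := by exact_mod_cast Nat.lt_succ_iff.1 hi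
      nlinarith [hx1.2, hx2.1]
    · have hlt : j < i := by omega
      have h1 : (j:ℤ) + 1 ≤ (i:ℤ) := by exact_mod_cast hlt
      have h2 : (j:ℤ) ≤ (k:ℤ) := by exact_mod_cast Nat.lt_succ_iff.1 hj
      nlinarith [hx2.2, hx1.1]

lemma sumT_double (k : ℕ) : 2 * (∑ j ∈ Finset.range (k+1), (k+1-j)) = (k+1)*(k+2) := by
  have h1 : ∑ j ∈ Finset.range (k+1), (k+1-j) = ∑ j ∈ Finset.range (k+1), (j+1) := by
    have := Finset.sum_range_reflect (fun j => j+1) (k+1)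
    rw [← this]
    apply Finset.sum_congr rfl
    intro j hj
    rw [Finset.mem_range] at hj
    omega
  rw [h1, Finset.sum_add_distrib, Finset.sum_const, Finset.card_range, smul_eq_mul, mul_one]
  have h2 : (∑ i ∈ Finset.range (k+1), i) * 2 = (k+1) * k := by
    simpa using Finset.sum_range_id_mul_two (k+1)
  calc 2 * (∑ i ∈ Finset.range (k+1), i + (k+1))
      = (∑ i ∈ Finset.range (k+1), i) * 2 + 2*(k+1) := by ring
    _ = (k+1)*k + 2*(k+1) := by rw [h2]
    _ = (k+1)*(k+2) := by ring

lemma keyA (s₁ d₁ s₂ d₂ : ℕ) (hsum : s₁ + d₁ = s₂ + d₂) (h2 : 2 ≤ s₁ + d₁)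
    (hs : s₂ < s₁) (hd : d₂ < s₁) :
    ∃ A : Finset ℤ, A.Nonempty ∧ (∀ a ∈ A, 0 ≤ a) ∧
      (gDiff s₁ d₁ A).card > (gDiff s₂ d₂ A).card := by
  have hs₁1 : 1 ≤ s₁ := by omega
  set m : ℤ := ((s₁:ℤ) + (d₁:ℤ)) + 1 with hmdef
  have hm1 : 3 ≤ m := by
    have : (2:ℤ) ≤ (s₁:ℤ) + (d₁:ℤ) := by exact_mod_cast h2
    omega
  set K : ℤ := (s₁:ℤ) * m + 1 with hKdef
  have hs₁1' : (1:ℤ) ≤ (s₁:ℤ) := by exact_mod_cast hs₁1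
  have hK : 1 ≤ K := by nlinarith
  set G : Finset ℤ := {0, 1, m} with hGdef
  have hG : ∀ g ∈ G, 0 ≤ g ∧ g ≤ K - 1 := by
    intro g hg
    rw [hGdef] at hg
    simp only [Finset.mem_insert, Finset.mem_singleton] at hg
    rcases hg with rfl | rfl | rfl
    · constructor <;> nlinarith
    · constructor <;> nlinarith
    · constructor <;> nlinarith
  have h0 : (0:ℤ) ∈ G := by simp [hGdef]
  refine ⟨mset K G, ⟨0, zero_mem_mset⟩, mset_nonneg hK hG, ?_⟩
  rw [main_card hK hG h0 s₁ d₁ (by omega), main_card hK hG h0 s₂ d₂ (by omega)]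
  have hT : ∀ k : ℕ, k ≤ s₁ →
      (itSum k G ∩ Finset.Icc 0 (K-1)).card = ∑ j ∈ Finset.range (k+1), (k+1-j) := by
    intro k hk
    have hkm : (k:ℤ) < m := by
      have : (k:ℤ) ≤ (s₁:ℤ) := by exact_mod_cast hk
      omega
    have hsub : blocks k m ⊆ Finset.Icc 0 (K-1) := by
      intro x hx
      simp only [blocks, Finset.mem_biUnion, Finset.mem_range, Finset.mem_Icc] at hx
      obtain ⟨j, hj, hx1, hx2⟩ := hx
      rw [Finset.mem_Icc]
      have hj0 : (0:ℤ) ≤ (j:ℤ) := by positivity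
      have hjk : (j:ℤ) ≤ (k:ℤ) := by exact_mod_cast Nat.lt_succ_iff.1 hj
      have hks : (k:ℤ) ≤ (s₁:ℤ) := by exact_mod_cast hk
      constructor
      · nlinarith
      · nlinarith
    rw [hGdef, itSum_triple, Finset.inter_eq_left.2 hsub, blocks_card k m hkm]
  rw [hT s₁ le_rfl, hT d₁ (by omega), hT s₂ (by omega), hT d₂ (by omega)]
  have hmid : ((s₁:ℤ) + (d₁:ℤ)) = ((s₂:ℤ) + (d₂:ℤ)) := by exact_mod_cast hsum
  rw [hmid]
  -- now compare the fringe sums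
  have key : ∑ j ∈ Finset.range (s₂+1), (s₂+1-j) + ∑ j ∈ Finset.range (d₂+1), (d₂+1-j)
      < ∑ j ∈ Finset.range (s₁+1), (s₁+1-j) + ∑ j ∈ Finset.range (d₁+1), (d₁+1-j) := by
    have e1 := sumT_double s₁
    have e2 := sumT_double d₁
    have e3 := sumT_double s₂
    have e4 := sumT_double d₂
    have hq : (s₂+1)*(s₂+2) + (d₂+1)*(d₂+2) < (s₁+1)*(s₁+2) + (d₁+1)*(d₁+2) := by
      zify
      have a1 : ((s₂:ℤ)) < (s₁:ℤ) := by exact_mod_cast hs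
      have a2 : ((d₂:ℤ)) < (s₁:ℤ) := by exact_mod_cast hd
      nlinarith [mul_pos (show (0:ℤ) < (s₁:ℤ) - s₂ by omega) (show (0:ℤ) < (s₁:ℤ) - d₂ by omega), hmid]
    omega
  omega

lemma gDiff_card_comm (s d : ℕ) (A : Finset ℤ) : (gDiff d s A).card = (gDiff s d A).card := by
  have h : gDiff d s A = (gDiff s d A).image (fun x => -x) := by
    ext x
    simp only [gDiff, Finset.mem_sub, Finset.mem_image]
    constructor
    · rintro ⟨b, hb, c, hc, rfl⟩
      exact ⟨c - b, ⟨c, hc, b, hb, rfl⟩, by ring⟩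
    · rintro ⟨y, ⟨b, hb, c, hc, rfl⟩, rfl⟩
      exact ⟨c, hc, b, hb, by ring⟩
  rw [h, Finset.card_image_of_injective _ neg_injective]

lemma keyAB (s₁ d₁ s₂ d₂ : ℕ) (hsum : s₁ + d₁ = s₂ + d₂) (h2 : 2 ≤ s₁ + d₁)
    (hd₁ : d₁ ≤ s₁) (hd₂ : d₂ ≤ s₂) (hne : s₁ ≠ s₂) :
    ∃ A : Finset ℤ, A.Nonempty ∧ (∀ a ∈ A, 0 ≤ a) ∧
      (gDiff s₁ d₁ A).card > (gDiff s₂ d₂ A).card := by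
  rcases lt_or_gt_of_ne hne with h | h
  · exact keyB s₁ d₁ s₂ d₂ hsum h2 hd₁ h
  · exact keyA s₁ d₁ s₂ d₂ hsum h2 h (by omega)

theorem stmt_8 (s₁ d₁ s₂ d₂ : ℕ)
    (hsum : s₁ + d₁ = s₂ + d₂) (h2 : 2 ≤ s₁ + d₁)
    (hne : ¬ ((s₁ = s₂ ∧ d₁ = d₂) ∨ (s₁ = d₂ ∧ d₁ = s₂))) :
    ∃ A : Finset ℤ, A.Nonempty ∧ (∀ a ∈ A, 0 ≤ a) ∧
      (gDiff s₁ d₁ A).card > (gDiff s₂ d₂ A).card := by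
  rcases le_total d₁ s₁ with h1 | h1 <;> rcases le_total d₂ s₂ with hh2 | hh2
  · exact keyAB s₁ d₁ s₂ d₂ hsum h2 h1 hh2 (by omega)
  · obtain ⟨A, hA1, hA2, hA3⟩ := keyAB s₁ d₁ d₂ s₂ (by omega) h2 h1 hh2 (by omega)
    exact ⟨A, hA1, hA2, by rwa [gDiff_card_comm s₂ d₂ A] at hA3⟩
  · obtain ⟨A, hA1, hA2, hA3⟩ := keyAB d₁ s₁ s₂ d₂ (by omega) (by omega) h1 hh2 (by omega)
    exact ⟨A, hA1, hA2, by rwa [gDiff_card_comm s₁ d₁ A] at hA3⟩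
  · obtain ⟨A, hA1, hA2, hA3⟩ := keyAB d₁ s₁ d₂ s₂ (by omega) (by omega) h1 hh2 (by omega)
    refine ⟨A, hA1, hA2, ?_⟩
    rwa [gDiff_card_comm s₁ d₁ A, gDiff_card_comm s₂ d₂ A] at hA3
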